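/- (Spread lower bound for a product of partially entangled pairs) Let |Ψ⟩ = (√(2/3)|00⟩ + √(1/3)|11⟩) and consider the product state |Ψ⟩^{⊗k} shared across a cut so that each pair is split between the two sides. The reduced density operator on side A has eigenvalues (2/3)^{k−j}(1/3)^j with multiplicity C(k,j) for j = 0,...,k. For any fixed δ ∈ (0, 1/2), the δ-smooth entanglement spread ES_δ(|Ψ⟩^{⊗k}) = S_max^δ − S_min^δ is at least c·√k for some constant c > 0 and all sufficiently large k. -/

import Mathlib

/-- δ-smooth max-entropy (base 2) of a spectrum indexed by a finite type. -/
noncomputable def smoothMax {ι : Type*} [Fintype ι] (lam : ι → ℝ) (δ : ℝ) : ℝ :=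
  sInf {x : ℝ | ∃ L : Finset ι, 1 - δ ≤ ∑ i ∈ L, lam i ∧ x = Real.logb 2 L.card}

/-- δ-smooth min-entropy (base 2) of a spectrum indexed by a finite type. -/
noncomputable def smoothMin {ι : Type*} [Fintype ι] (lam : ι → ℝ) (δ : ℝ) : ℝ :=
  - sInf {x : ℝ | ∃ L : Finset ι, ∃ h : L.Nonempty,
      1 - δ ≤ ∑ i ∈ L, lam i ∧ x = Real.logb 2 (L.sup' h lam)}

/-- The spectrum of the reduced state of `|Ψ⟩^{⊗k}` with
`|Ψ⟩ = √(2/3)|00⟩ + √(1/3)|11⟩`: the eigenvalue attached to the bit string `x` is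
`(2/3)^{k−|x|} (1/3)^{|x|}` where `|x|` is the Hamming weight. -/
noncomputable def pairSpectrum (k : ℕ) : (Fin k → Bool) → ℝ := fun x =>
  (2 / 3 : ℝ) ^ (k - (Finset.univ.filter (fun i => x i = true)).card)
    * (1 / 3 : ℝ) ^ ((Finset.univ.filter (fun i => x i = true)).card)


section Aux
set_option maxHeartbeats 1000000
open Finset


/-- binomial weight -/
noncomputable def pk (k j : ℕ) : ℝ := (k.choose j : ℝ) * (2/3 : ℝ)^(k-j) * (1/3 : ℝ)^j

/-- cumulative -/
noncomputable def Fk (k j : ℕ) : ℝ := ∑ i ∈ Finset.range (j+1), pk k i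

/-- eigenvalue attached to weight j -/
noncomputable def valk (k j : ℕ) : ℝ := (2/3 : ℝ)^(k-j) * (1/3 : ℝ)^j

lemma valk_pos (k j : ℕ) : 0 < valk k j := by
  unfold valk; positivity

lemma pk_nonneg (k j : ℕ) : 0 ≤ pk k j := by unfold pk; positivity

lemma pk_eq (k j : ℕ) : pk k j = (k.choose j : ℝ) * valk k j := by
  unfold pk valk; ring

lemma valk_anti (k : ℕ) : Antitone (valk k) := by
  apply antitone_nat_of_succ_le
  intro j
  unfold valk
  rcases lt_or_ge j k with h | h
  · have : k - j = (k - (j+1)) + 1 := by omega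
    rw [this, pow_succ, pow_succ]
    have h1 : (0:ℝ) ≤ (2/3:ℝ)^(k-(j+1)) := by positivity
    have h2 : (0:ℝ) ≤ (1/3:ℝ)^j := by positivity
    nlinarith
  · have h1 : k - j = 0 := by omega
    have h2 : k - (j+1) = 0 := by omega
    rw [h1, h2, pow_succ]
    have h2 : (0:ℝ) < (1/3:ℝ)^j := by positivity
    nlinarith

lemma pk_zero_of_lt (k j : ℕ) (h : k < j) : pk k j = 0 := by
  unfold pk
  rw [Nat.choose_eq_zero_of_lt h]; simp

lemma sum_pk (k : ℕ) : ∑ i ∈ Finset.range (k+1), pk k i = 1 := by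
  have h := add_pow (1/3 : ℝ) (2/3) k
  have h13 : (1/3 : ℝ) + 2/3 = 1 := by norm_num
  rw [h13, one_pow] at h
  rw [h]
  apply Finset.sum_congr rfl
  intro i _
  unfold pk; ring

lemma sum_pk' (k N : ℕ) (h : k + 1 ≤ N) : ∑ i ∈ Finset.range N, pk k i = 1 := by
  rw [← sum_pk k]
  symm
  apply Finset.sum_subset
  · exact Finset.range_subset_range.2 h
  · intro x _ hx
    simp only [Finset.mem_range, not_lt] at hx
    exact pk_zero_of_lt k x (by omega)

lemma sum_window_le (k : ℕ) (S : Finset ℕ) : ∑ i ∈ S, pk k i ≤ 1 := by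
  have : ∑ i ∈ S, pk k i ≤ ∑ i ∈ Finset.range (max (k+1) (S.sup id + 1)), pk k i := by
    apply Finset.sum_le_sum_of_subset_of_nonneg
    · intro x hx
      simp only [Finset.mem_range]
      have := Finset.le_sup (f := id) hx
      simp at this ⊢
      omega
    · intro i _ _; exact pk_nonneg k i
  rw [sum_pk' k _ (le_max_left _ _)] at this
  exact this

lemma pk_ratio (k i : ℕ) : 2 * (i+1 : ℝ) * pk k (i+1) = ((k - i : ℕ) : ℝ) * pk k i := by
  rcases lt_or_ge i k with h | h
  · unfold pk
    have hc : (k.choose (i+1) : ℝ) * (i+1) = (k.choose i : ℝ) * ((k - i : ℕ) : ℝ) := by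
      exact_mod_cast congrArg (Nat.cast (R := ℝ)) (Nat.choose_succ_right_eq k i)
    have he : k - i = (k - (i+1)) + 1 := by omega
    rw [he] at hc ⊢
    push_cast at hc ⊢
    rw [pow_succ, pow_succ]
    linear_combination ((2:ℝ)/3 * (2/3)^(k-(i+1)) * (1/3)^i) * hc
  · rw [pk_zero_of_lt k (i+1) (by omega)]
    have : k - i = 0 := by omega
    rw [this]
    simp

lemma pk_step_up (k i : ℕ) (h : 3*i + 2 ≤ k) : pk k i ≤ pk k (i+1) := by
  have hr := pk_ratio k i
  have h1 : (2*(i+1) : ℝ) ≤ ((k - i : ℕ) : ℝ) := by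
    have : 2*(i+1) ≤ k - i := by omega
    exact_mod_cast this
  have h2 : (0:ℝ) < 2*(i+1 : ℝ) := by positivity
  nlinarith [pk_nonneg k i, pk_nonneg k (i+1)]

lemma pk_step_down (k i : ℕ) (h : k ≤ 3*i + 2) : pk k (i+1) ≤ pk k i := by
  have hr := pk_ratio k i
  have h1 : ((k - i : ℕ) : ℝ) ≤ (2*(i+1) : ℝ) := by
    have : k - i ≤ 2*(i+1) := by omega
    exact_mod_cast this
  have h2 : (0:ℝ) < 2*(i+1 : ℝ) := by positivity
  nlinarith [pk_nonneg k i, pk_nonneg k (i+1)]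

lemma pk_step_ratio (k i : ℕ) (r : ℝ) (hr0 : 0 ≤ r)
    (h : r * (2*(i+1)) ≤ ((k - i : ℕ) : ℝ)) : r * pk k i ≤ pk k (i+1) := by
  have hratio := pk_ratio k i
  have h2 : (0:ℝ) < 2*(i+1 : ℝ) := by positivity
  nlinarith [pk_nonneg k i, pk_nonneg k (i+1)]

lemma chain_up (k j m : ℕ) (h : ∀ i, j ≤ i → i < j + m → 3*i + 2 ≤ k) :
    ∀ s, s ≤ m → pk k j ≤ pk k (j + s) := by
  intro s hs
  induction s with
  | zero => simp
  | succ n ih =>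
    have h1 : pk k j ≤ pk k (j + n) := ih (by omega)
    have h2 : pk k (j+n) ≤ pk k (j+n+1) := pk_step_up k (j+n) (h (j+n) (by omega) (by omega))
    calc pk k j ≤ pk k (j+n) := h1
    _ ≤ pk k (j + (n+1)) := by rw [show j + (n+1) = j+n+1 by omega]; exact h2

lemma chain_down (k j m : ℕ) (hjm : m ≤ j) (h : ∀ i, j - m ≤ i → i < j → k ≤ 3*i + 2) :
    ∀ s, s ≤ m → pk k j ≤ pk k (j - s) := by
  intro s hs
  induction s with
  | zero => simp
  | succ n ih =>
    have h1 : pk k j ≤ pk k (j - n) := ih (by omega)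
    have h2 : pk k (j - (n+1) + 1) ≤ pk k (j - (n+1)) :=
      pk_step_down k (j - (n+1)) (h _ (by omega) (by omega))
    rw [show j - (n+1) + 1 = j - n by omega] at h2
    linarith

lemma chain_ratio (k j m : ℕ) (r : ℝ) (hr0 : 0 ≤ r) (hr1 : r ≤ 1)
    (h : ∀ i, j ≤ i → i < j + m → r * (2*(i+1)) ≤ ((k - i : ℕ) : ℝ)) :
    ∀ s, s ≤ m → r^m * pk k j ≤ pk k (j + s) := by
  have key : ∀ s, s ≤ m → r^s * pk k j ≤ pk k (j + s) := by
    intro s hs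
    induction s with
    | zero => simp
    | succ n ih =>
      have h1 : r^n * pk k j ≤ pk k (j + n) := ih (by omega)
      have h2 : r * pk k (j+n) ≤ pk k (j+n+1) :=
        pk_step_ratio k (j+n) r hr0 (h (j+n) (by omega) (by omega))
      have : r * (r^n * pk k j) ≤ r * pk k (j+n) := by
        apply mul_le_mul_of_nonneg_left h1 hr0
      calc r^(n+1) * pk k j = r * (r^n * pk k j) := by ring
      _ ≤ r * pk k (j+n) := this
      _ ≤ pk k (j+n+1) := h2
      _ = pk k (j + (n+1)) := by rw [show j + (n+1) = j+n+1 by omega]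
  intro s hs
  calc r^m * pk k j ≤ r^s * pk k j := by
        apply mul_le_mul_of_nonneg_right _ (pk_nonneg k j)
        exact pow_le_pow_of_le_one hr0 hr1 hs
  _ ≤ pk k (j + s) := key s hs

lemma exp_neg_two_le (x : ℝ) (h0 : 0 ≤ x) (h1 : x ≤ 1/2) : Real.exp (-(2*x)) ≤ 1 - x := by
  have h2 : 1 + 2*x ≤ Real.exp (2*x) := by
    have := Real.add_one_le_exp (2*x)
    linarith
  have h3 : (0:ℝ) < 1 + 2*x := by linarith
  have h4 : Real.exp (-(2*x)) = 1 / Real.exp (2*x) := by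
    rw [Real.exp_neg]; ring
  rw [h4]
  have h5 : 1 / Real.exp (2*x) ≤ 1 / (1 + 2*x) := by
    apply one_div_le_one_div_of_le h3 h2
  have h6 : 1 / (1 + 2*x) ≤ 1 - x := by
    rw [div_le_iff₀ h3]
    nlinarith
  linarith

/-- sum over a shifted window is at most 1 -/
lemma shifted_window_le (k j m : ℕ) : ∑ s ∈ Finset.range (m+1), pk k (j + s) ≤ 1 := by
  have h : ∑ i ∈ Finset.Ico j (j+m+1), pk k i = ∑ s ∈ Finset.range (m+1), pk k (j+s) := by
    rw [Finset.sum_Ico_eq_sum_range, show j+m+1-j = m+1 by omega]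
  rw [← h]
  exact sum_window_le k _

lemma lower_count (k j m : ℕ) (c : ℝ) (hc : ∀ s, s ≤ m → c ≤ pk k (j + s)) :
    (m+1 : ℝ) * c ≤ 1 := by
  have h1 : (m+1 : ℝ) * c = ∑ _s ∈ Finset.range (m+1), c := by
    rw [Finset.sum_const, Finset.card_range]; push_cast; ring
  have h2 : ∑ _s ∈ Finset.range (m+1), c ≤ ∑ s ∈ Finset.range (m+1), pk k (j + s) := by
    apply Finset.sum_le_sum
    intro s hs
    exact hc s (by simpa using Nat.lt_succ_iff.mp (Finset.mem_range.mp hs))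
  calc (m+1:ℝ)*c = _ := h1
  _ ≤ _ := h2
  _ ≤ 1 := shifted_window_le k j m

lemma pk_le_bound (k : ℕ) (hk : 1000 ≤ k) (j : ℕ) :
    pk k j ≤ Real.exp 30 / Real.sqrt k := by
  set m := Nat.sqrt k with hm
  have hm2 : m * m ≤ k := by have := Nat.sqrt_le' k; nlinarith
  have hk2 : k < (m+1) * (m+1) := by have := Nat.lt_succ_sqrt' k; nlinarith
  have hm31 : 31 ≤ m := by nlinarith
  have hsk0 : (0:ℝ) < Real.sqrt k := Real.sqrt_pos.2 (by positivity)
  have hskm : (m : ℝ) ≤ Real.sqrt k := by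
    rw [show ((m:ℝ)) = Real.sqrt ((m:ℝ)^2) from (Real.sqrt_sq (by positivity)).symm]
    apply Real.sqrt_le_sqrt
    have hcast : ((m*m : ℕ):ℝ) ≤ (k:ℝ) := by exact_mod_cast hm2
    push_cast at hcast ⊢
    nlinarith
  have hskm1 : Real.sqrt k ≤ (m : ℝ) + 1 := by
    rw [show ((m:ℝ)+1) = Real.sqrt (((m:ℝ)+1)^2) from (Real.sqrt_sq (by positivity)).symm]
    apply Real.sqrt_le_sqrt
    have hcast : (k:ℝ) ≤ (((m+1)*(m+1) : ℕ):ℝ) := by exact_mod_cast hk2.le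
    push_cast at hcast ⊢
    nlinarith
  have hsk31 : (31:ℝ) ≤ Real.sqrt k := le_trans (by exact_mod_cast hm31) hskm
  have hexp1 : (1:ℝ) ≤ Real.exp 30 := by
    rw [show (1:ℝ) = Real.exp 0 from (Real.exp_zero).symm]
    exact Real.exp_le_exp.2 (by norm_num)
  -- common final step from `pk k j ≤ C/(m+1)` with `C ≥ 1`... we handle per-case
  have easy : pk k j ≤ 1/(m+1:ℝ) → pk k j ≤ Real.exp 30 / Real.sqrt k := by
    intro h
    calc pk k j ≤ 1/(m+1:ℝ) := h
    _ ≤ 1 / Real.sqrt k := by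
        apply one_div_le_one_div_of_le hsk0 (by push_cast at hskm1 ⊢; linarith)
    _ ≤ Real.exp 30 / Real.sqrt k := by gcongr
  rcases le_or_gt (3*(j+m)) (k+1) with h1 | h1
  · -- Case 1: window to the right, increasing region
    apply easy
    have hc := chain_up k j m (fun i hi1 hi2 => by omega)
    have := lower_count k j m (pk k j) hc
    rw [le_div_iff₀ (by positivity)]
    linarith
  rcases le_or_gt (k+2) (3*(j-m)) with h2 | h2
  · -- Case 2: window to the left, decreasing region
    apply easy
    have hjm : m ≤ j := by by_contra hcon; push_neg at hcon; omega
    have hcd := chain_down k j m hjm (fun i hi1 hi2 => by omega)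
    have hc : ∀ s, s ≤ m → pk k j ≤ pk k ((j-m) + s) := by
      intro s hs
      rw [show j-m+s = j - (m-s) by omega]
      exact hcd (m-s) (by omega)
    have := lower_count k (j-m) m (pk k j) hc
    rw [le_div_iff₀ (by positivity)]
    linarith
  · -- Case 3: near the mode
    have hjm : m ≤ j := by
      by_contra hcon; push_neg at hcon
      have : j - m = 0 := by omega
      nlinarith
    have hB : 3*j ≤ k + 1 + 3*m := by omega
    have hA : k + 2 ≤ 3*j + 3*m := by omega
    have h6m : 6*m ≤ k := by nlinarith
    set sk := Real.sqrt k with hsk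
    have h15 : 15 / sk ≤ 1/2 := by rw [div_le_iff₀ hsk0]; linarith
    have h15' : (0:ℝ) ≤ 15 / sk := by positivity
    set r : ℝ := 1 - 15/sk with hr
    have hr0 : 0 ≤ r := by rw [hr]; linarith
    have hr1 : r ≤ 1 := by rw [hr]; linarith
    have hratio : ∀ i, j ≤ i → i < j + m → r * (2*(i+1)) ≤ ((k - i : ℕ) : ℝ) := by
      intro i hi1 hi2
      have hik : i < k := by omega
      have hAi : k ≤ 3*i + 3*m + 2 := by omega
      have hBi : 3*i + 2 ≤ k + 6*m := by omega
      have hcast : ((k - i : ℕ) : ℝ) = (k:ℝ) - (i:ℝ) := by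
        rw [Nat.cast_sub hik.le]
      rw [hcast]
      have hAi' : (k:ℝ) ≤ 3*(i:ℝ) + 3*(m:ℝ) + 2 := by exact_mod_cast hAi
      have hBi' : 3*(i:ℝ) + 2 ≤ (k:ℝ) + 6*(m:ℝ) := by exact_mod_cast hBi
      have hm31' : (31:ℝ) ≤ (m:ℝ) := by exact_mod_cast hm31
      have hmm' : (m:ℝ)*(m:ℝ) ≤ (k:ℝ) := by exact_mod_cast hm2
      -- multiply through by sk > 0
      have goal2 : (sk - 15) * (2*((i:ℝ)+1)) ≤ sk * ((k:ℝ) - i) := by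
        rcases le_or_gt (3*(i:ℝ)+2) (k:ℝ) with hcase | hcase
        · nlinarith [mul_nonneg hsk0.le (sub_nonneg.2 hcase)]
        · have hp1 : sk * (3*(i:ℝ)+2-(k:ℝ)) ≤ ((m:ℝ)+1) * (6*(m:ℝ)) := by
            apply mul_le_mul hskm1 (by linarith) (by linarith) (by positivity)
          have hp2 : ((m:ℝ)+1) * (6*(m:ℝ)) ≤ 30*((i:ℝ)+1) := by nlinarith
          nlinarith
      have hrsk : r * sk = sk - 15 := by
        rw [hr, sub_mul, one_mul, div_mul_cancel₀ _ (ne_of_gt hsk0)]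
      rw [← mul_le_mul_iff_of_pos_right hsk0]
      have hexpand : r * (2*((i:ℝ)+1)) * sk = (sk - 15) * (2*((i:ℝ)+1)) := by
        linear_combination (2*((i:ℝ)+1)) * hrsk
      rw [hexpand]
      linarith [goal2]
    have hchain := chain_ratio k j m r hr0 hr1 hratio
    -- r^m ≥ exp (-30)
    have hrlow : Real.exp (-(2*(15/sk))) ≤ r := exp_neg_two_le (15/sk) h15' h15
    have hrm : Real.exp (-(30:ℝ)) ≤ r^m := by
      have hp : (Real.exp (-(2*(15/sk))))^m ≤ r^m :=
        pow_le_pow_left₀ (Real.exp_pos _).le hrlow m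
      have he : (Real.exp (-(2*(15/sk))))^m = Real.exp ((m:ℝ) * (-(2*(15/sk)))) := by
        rw [← Real.exp_nat_mul]
      have hle : -(30:ℝ) ≤ (m:ℝ) * (-(2*(15/sk))) := by
        have h1 : (m:ℝ) * (30/sk) ≤ 30 := by
          rw [mul_div_assoc', div_le_iff₀ hsk0]
          nlinarith [hskm]
        have heq : (m:ℝ) * (-(2*(15/sk))) = -((m:ℝ)*(30/sk)) := by ring
        rw [heq]
        linarith
      calc Real.exp (-(30:ℝ)) ≤ Real.exp ((m:ℝ) * (-(2*(15/sk)))) := Real.exp_le_exp.2 hle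
      _ = (Real.exp (-(2*(15/sk))))^m := he.symm
      _ ≤ r^m := hp
    have hc : ∀ s, s ≤ m → Real.exp (-(30:ℝ)) * pk k j ≤ pk k (j + s) := by
      intro s hs
      calc Real.exp (-(30:ℝ)) * pk k j ≤ r^m * pk k j :=
        mul_le_mul_of_nonneg_right hrm (pk_nonneg k j)
      _ ≤ pk k (j+s) := hchain s hs
    have hlc := lower_count k j m _ hc
    have hexpinv : Real.exp (-(30:ℝ)) * Real.exp (30:ℝ) = 1 := by
      rw [← Real.exp_add]; norm_num
    rw [le_div_iff₀ hsk0]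
    have hskm1' : pk k j * sk ≤ pk k j * ((m:ℝ)+1) :=
      mul_le_mul_of_nonneg_left hskm1 (pk_nonneg k j)
    have hexpos : (0:ℝ) < Real.exp (-(30:ℝ)) := Real.exp_pos _
    nlinarith [hlc, hexpinv, hskm1', pk_nonneg k j, Real.exp_pos (30:ℝ)]


def wt {k : ℕ} (x : Fin k → Bool) : ℕ := (Finset.univ.filter (fun i => x i = true)).card

lemma pairSpectrum_eq (k : ℕ) (x : Fin k → Bool) : pairSpectrum k x = valk k (wt x) := rfl

lemma wt_le (k : ℕ) (x : Fin k → Bool) : wt x ≤ k := by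
  unfold wt
  calc (Finset.univ.filter (fun i => x i = true)).card ≤ (Finset.univ : Finset (Fin k)).card :=
    Finset.card_filter_le _ _
  _ = k := by simp

lemma card_wt (k j : ℕ) :
    ((Finset.univ : Finset (Fin k → Bool)).filter (fun x => wt x = j)).card = k.choose j := by
  have h := Finset.card_powersetCard j (Finset.univ : Finset (Fin k))
  rw [Finset.card_univ, Fintype.card_fin] at h
  rw [← h]
  apply Finset.card_bij (fun x _ => Finset.univ.filter (fun i => x i = true))
  · intro x hx
    simp only [Finset.mem_filter, Finset.mem_univ, true_and] at hx
    rw [Finset.mem_powersetCard]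
    exact ⟨Finset.subset_univ _, hx⟩
  · intro x hx y hy hxy
    funext i
    have := Finset.ext_iff.1 hxy i
    simp only [Finset.mem_filter, Finset.mem_univ, true_and] at this
    cases hxi : x i <;> cases hyi : y i <;> simp [hxi, hyi] at this ⊢
  · intro s hs
    rw [Finset.mem_powersetCard] at hs
    refine ⟨fun i => decide (i ∈ s), ?_, ?_⟩
    · simp only [Finset.mem_filter, Finset.mem_univ, true_and]
      unfold wt
      have hfe : Finset.univ.filter (fun i => decide (i ∈ s) = true) = s := by
        ext i; simp
      rw [hfe]
      exact hs.2
    · ext i; simp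


lemma pk_eq' (k j : ℕ) : pk k j = (k.choose j : ℝ) * valk k j := by
  unfold pk valk; ring

lemma sum_fiber (k j : ℕ) :
    ∑ x ∈ (Finset.univ : Finset (Fin k → Bool)).filter (fun x => wt x = j),
      pairSpectrum k x = pk k j := by
  have h1 : ∀ x ∈ (Finset.univ : Finset (Fin k → Bool)).filter (fun x => wt x = j),
      pairSpectrum k x = valk k j := by
    intro x hx
    simp only [Finset.mem_filter] at hx
    rw [pairSpectrum_eq, hx.2]
  rw [Finset.sum_congr rfl h1, Finset.sum_const, card_wt, pk_eq', nsmul_eq_mul]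

lemma sum_cum (k j : ℕ) :
    ∑ x ∈ (Finset.univ : Finset (Fin k → Bool)).filter (fun x => wt x ≤ j),
      pairSpectrum k x = Fk k j := by
  have h := Finset.sum_fiberwise_of_maps_to
    (s := (Finset.univ : Finset (Fin k → Bool)).filter (fun x => wt x ≤ j))
    (t := Finset.range (j+1)) (g := fun x => wt x)
    (fun x hx => by simp only [Finset.mem_filter] at hx; simp [Finset.mem_range]; omega)
    (pairSpectrum k)
  rw [← h]
  unfold Fk
  apply Finset.sum_congr rfl
  intro i hi
  rw [Finset.mem_range] at hi
  have : ((Finset.univ : Finset (Fin k → Bool)).filter (fun x => wt x ≤ j)).filter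
      (fun x => wt x = i) = (Finset.univ : Finset (Fin k → Bool)).filter (fun x => wt x = i) := by
    ext x
    simp only [Finset.mem_filter, Finset.mem_univ, true_and]
    constructor
    · rintro ⟨_, h2⟩; exact h2
    · intro h2; exact ⟨by omega, h2⟩
  rw [this, sum_fiber]

lemma sum_total (k : ℕ) : ∑ x : Fin k → Bool, pairSpectrum k x = 1 := by
  have h : (Finset.univ : Finset (Fin k → Bool)).filter (fun x => wt x ≤ k) = Finset.univ := by
    apply Finset.filter_true_of_mem
    intro x _
    exact wt_le k x
  have := sum_cum k k
  rw [h] at this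
  rw [this]
  unfold Fk
  exact sum_pk k

lemma sum_tail (k j : ℕ) :
    ∑ x ∈ (Finset.univ : Finset (Fin k → Bool)).filter (fun x => ¬ wt x ≤ j),
      pairSpectrum k x = 1 - Fk k j := by
  have h := Finset.sum_filter_add_sum_filter_not (Finset.univ : Finset (Fin k → Bool))
    (fun x => wt x ≤ j) (pairSpectrum k)
  rw [sum_cum, sum_total] at h
  linarith

lemma Fk_mono (k : ℕ) : Monotone (Fk k) := by
  intro i j hij
  apply Finset.sum_le_sum_of_subset_of_nonneg
  · exact Finset.range_subset_range.2 (by omega)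
  · intro x _ _; exact pk_nonneg k x

lemma Fk_top (k : ℕ) : Fk k k = 1 := sum_pk k

lemma Fk_zero (k : ℕ) : Fk k 0 = (2/3:ℝ)^k := by
  unfold Fk
  rw [Finset.sum_range_one]
  unfold pk
  simp

lemma quantiles (δ : ℝ) (hδ0 : 0 < δ) (hδ1 : δ < 1/2) (k : ℕ) (hk : 1000 ≤ k) :
    ∃ j1 j2 : ℕ, j1 ≤ k ∧ j2 < k ∧ δ < Fk k j1 ∧ Fk k j2 ≤ 1 - δ - (1-2*δ)/4 ∧
      (3*(1-2*δ)/4) * Real.sqrt k * Real.exp (-(30:ℝ)) - 2 ≤ (j2:ℝ) - (j1:ℝ) := by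
  set ε : ℝ := (1-2*δ)/4 with hε
  set γ : ℝ := 3*(1-2*δ)/4 with hγ
  have hε0 : 0 < ε := by rw [hε]; linarith
  have hγ0 : 0 < γ := by rw [hγ]; linarith
  have hδε : δ ≤ 1 - δ - ε := by rw [hε]; linarith
  have hEa : ∃ j, δ < Fk k j := ⟨k, by rw [Fk_top]; linarith⟩
  have hEb : ∃ j, 1 - δ - ε < Fk k j := ⟨k, by rw [Fk_top]; linarith⟩
  set a := Nat.find hEa with ha
  set b := Nat.find hEb with hb
  have hFa : δ < Fk k a := Nat.find_spec hEa
  have hFb : 1 - δ - ε < Fk k b := Nat.find_spec hEb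
  have hab : a ≤ b := Nat.find_min' hEa (by linarith)
  have hak : a ≤ k := Nat.find_min' hEa (by rw [Fk_top]; linarith)
  have hb1 : 1 ≤ b := by
    rcases Nat.eq_zero_or_pos b with h0 | h0
    · exfalso
      rw [h0, Fk_zero] at hFb
      have h23 : (2/3:ℝ)^k ≤ (2/3:ℝ)^2 := by
        apply pow_le_pow_of_le_one (by norm_num) (by norm_num) (by omega)
      rw [hε] at hFb
      nlinarith
    · exact h0
  have hFb1 : Fk k (b-1) ≤ 1 - δ - ε := by
    have := Nat.find_min hEb (m := b-1) (by omega)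
    push_neg at this
    exact this
  have hbk : b - 1 < k := by
    by_contra hcon
    push_neg at hcon
    have := Fk_mono k hcon
    rw [Fk_top] at this
    nlinarith
  -- mass between a and b
  have hmass : γ < ∑ i ∈ Finset.Ico a (b+1), pk k i := by
    have hsub := Finset.sum_Ico_eq_sub (f := pk k) (by omega : a ≤ b+1)
    have hra : ∑ i ∈ Finset.range a, pk k i ≤ δ := by
      rcases Nat.eq_zero_or_pos a with h0 | h0
      · rw [h0]; simp; linarith
      · have := Nat.find_min hEa (m := a-1) (by omega)
        push_neg at this
        have heq : a - 1 + 1 = a := by omega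
        unfold Fk at this
        rw [heq] at this
        exact this
    have hrb : ∑ i ∈ Finset.range (b+1), pk k i = Fk k b := rfl
    rw [hsub, hrb]
    rw [hγ, hε] at *
    linarith
  have hM : ∀ i ∈ Finset.Ico a (b+1), pk k i ≤ Real.exp 30 / Real.sqrt k :=
    fun i _ => pk_le_bound k hk i
  have hcount : ∑ i ∈ Finset.Ico a (b+1), pk k i ≤
      ((b+1-a : ℕ):ℝ) * (Real.exp 30 / Real.sqrt k) := by
    have := Finset.sum_le_card_nsmul _ _ _ hM
    rw [Nat.card_Ico] at this
    simpa [nsmul_eq_mul] using this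
  have hsk0 : (0:ℝ) < Real.sqrt k := Real.sqrt_pos.2 (by positivity)
  have hcard : γ * Real.sqrt k * Real.exp (-(30:ℝ)) ≤ ((b+1-a : ℕ):ℝ) := by
    have hM0 : (0:ℝ) < Real.exp 30 / Real.sqrt k := by positivity
    have h1 : γ < ((b+1-a : ℕ):ℝ) * (Real.exp 30 / Real.sqrt k) := lt_of_lt_of_le hmass hcount
    have hinv : Real.exp (-(30:ℝ)) * Real.exp (30:ℝ) = 1 := by
      rw [← Real.exp_add]; norm_num
    rw [← mul_div_assoc, lt_div_iff₀ hsk0] at h1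
    have h3 := mul_lt_mul_of_pos_right h1 (Real.exp_pos (-(30:ℝ)))
    have hBE : ((b+1-a : ℕ):ℝ) * Real.exp 30 * Real.exp (-(30:ℝ)) = ((b+1-a : ℕ):ℝ) := by
      rw [mul_assoc, ← Real.exp_add]; norm_num
    rw [hBE] at h3
    linarith
  refine ⟨a, b-1, hak, hbk, hFa, ?_, ?_⟩
  · exact hFb1
  · have hc : ((b+1-a : ℕ):ℝ) = (b:ℝ) + 1 - a := by
      have : a ≤ b + 1 := by omega
      push_cast [Nat.cast_sub this]
      ring
    have hc2 : ((b-1 : ℕ):ℝ) = (b:ℝ) - 1 := by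
      push_cast [Nat.cast_sub hb1]
      ring
    rw [hc] at hcard
    rw [hc2]
    linarith







lemma pairSpectrum_nonneg (k : ℕ) (x : Fin k → Bool) : 0 ≤ pairSpectrum k x := by
  rw [pairSpectrum_eq]; exact (valk_pos k _).le

lemma smoothMax_ge (k : ℕ) (δ ε : ℝ) (hδ : 0 < δ) (hε : 0 < ε) (j2 : ℕ)
    (hF : Fk k j2 ≤ 1 - δ - ε) :
    Real.logb 2 (ε / valk k (j2+1)) ≤ smoothMax (pairSpectrum k) δ := by
  apply le_csInf
  · refine ⟨Real.logb 2 (Finset.univ : Finset (Fin k → Bool)).card,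
      Finset.univ, ?_, rfl⟩
    rw [sum_total]
    linarith
  · rintro y ⟨L, hL, rfl⟩
    set L' := L.filter (fun x => ¬ wt x ≤ j2) with hL'
    have hsplit : ∑ x ∈ L, pairSpectrum k x =
        ∑ x ∈ L.filter (fun x => wt x ≤ j2), pairSpectrum k x +
        ∑ x ∈ L', pairSpectrum k x :=
      (Finset.sum_filter_add_sum_filter_not L _ _).symm
    have hsub : ∑ x ∈ L.filter (fun x => wt x ≤ j2), pairSpectrum k x ≤ Fk k j2 := by
      rw [← sum_cum k j2]
      apply Finset.sum_le_sum_of_subset_of_nonneg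
      · intro x hx
        simp only [Finset.mem_filter] at hx ⊢
        exact ⟨Finset.mem_univ x, hx.2⟩
      · intro x _ _; exact pairSpectrum_nonneg k x
    have hmass : ε ≤ ∑ x ∈ L', pairSpectrum k x := by linarith
    have hbound : ∀ x ∈ L', pairSpectrum k x ≤ valk k (j2+1) := by
      intro x hx
      simp only [hL', Finset.mem_filter] at hx
      rw [pairSpectrum_eq]
      exact valk_anti k (by omega)
    have hcard : ∑ x ∈ L', pairSpectrum k x ≤ (L'.card : ℝ) * valk k (j2+1) := by
      have := Finset.sum_le_card_nsmul L' _ _ hbound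
      simpa [nsmul_eq_mul] using this
    have hv := valk_pos k (j2+1)
    have hcard2 : ε / valk k (j2+1) ≤ (L'.card : ℝ) := by
      rw [div_le_iff₀ hv]
      nlinarith
    have hcard3 : (L'.card : ℝ) ≤ (L.card : ℝ) := by
      exact_mod_cast Finset.card_filter_le L _
    apply Real.logb_le_logb_of_le (by norm_num : (1:ℝ) < 2) (by positivity)
    linarith

lemma smoothMin_le (k : ℕ) (δ : ℝ) (hδ0 : 0 < δ) (j1 : ℕ)
    (hF : δ < Fk k j1) :
    smoothMin (pairSpectrum k) δ ≤ - Real.logb 2 (valk k j1) := by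
  unfold smoothMin
  have h : Real.logb 2 (valk k j1) ≤ sInf {x : ℝ | ∃ L : Finset (Fin k → Bool),
      ∃ h : L.Nonempty, 1 - δ ≤ ∑ i ∈ L, pairSpectrum k i ∧
        x = Real.logb 2 (L.sup' h (pairSpectrum k))} := by
    apply le_csInf
    · refine ⟨_, Finset.univ, Finset.univ_nonempty, ?_, rfl⟩
      rw [show ∑ i ∈ Finset.univ, pairSpectrum k i = 1 from sum_total k]
      linarith
    · rintro y ⟨L, hne, hL, rfl⟩
      have hex : ∃ x ∈ L, valk k j1 ≤ pairSpectrum k x := by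
        by_contra hcon
        push_neg at hcon
        have hsubset : L ⊆ (Finset.univ : Finset (Fin k → Bool)).filter
            (fun x => ¬ wt x ≤ j1) := by
          intro x hx
          simp only [Finset.mem_filter, Finset.mem_univ, true_and]
          intro hwt
          have h1 := valk_anti k hwt
          have h2 := hcon x hx
          rw [pairSpectrum_eq] at h2
          linarith
        have hle : ∑ x ∈ L, pairSpectrum k x ≤ 1 - Fk k j1 := by
          rw [← sum_tail k j1]
          apply Finset.sum_le_sum_of_subset_of_nonneg hsubset
          intro x _ _; exact pairSpectrum_nonneg k x
        linarith
      obtain ⟨x, hxL, hxv⟩ := hex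
      have hsup : valk k j1 ≤ L.sup' hne (pairSpectrum k) :=
        le_trans hxv (Finset.le_sup' _ hxL)
      exact Real.logb_le_logb_of_le (by norm_num : (1:ℝ) < 2) (valk_pos k j1) hsup
  linarith


lemma logb_valk (k j : ℕ) (hj : j ≤ k) :
    Real.logb 2 (valk k j) = ((k:ℝ) - j) * Real.logb 2 (2/3) + (j:ℝ) * Real.logb 2 (1/3) := by
  unfold valk
  rw [Real.logb_mul (by positivity) (by positivity), Real.logb_pow, Real.logb_pow]
  rw [Nat.cast_sub hj]

lemma logb_diff : Real.logb 2 (2/3 : ℝ) - Real.logb 2 (1/3 : ℝ) = 1 := by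
  rw [← Real.logb_div (by norm_num) (by norm_num)]
  norm_num


end Aux

/-- Spread lower bound for a product of partially entangled pairs:
for any fixed `δ ∈ (0, 1/2)` there is a constant `c > 0` such that for all sufficiently
large `k`, the δ-smooth entanglement spread of `|Ψ⟩^{⊗k}` is at least `c·√k`. -/
theorem stmt_12 (δ : ℝ) (hδ0 : 0 < δ) (hδ1 : δ < 1 / 2) :
    ∃ c : ℝ, 0 < c ∧ ∃ N : ℕ, ∀ k ≥ N,
      c * Real.sqrt k ≤ smoothMax (pairSpectrum k) δ - smoothMin (pairSpectrum k) δ := by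
  set ε : ℝ := (1-2*δ)/4 with hε
  set γ : ℝ := 3*(1-2*δ)/4 with hγ
  have hε0 : 0 < ε := by rw [hε]; linarith
  have hε1 : ε < 1 := by rw [hε]; linarith
  have hγ0 : 0 < γ := by rw [hγ]; linarith
  set c : ℝ := γ * Real.exp (-(30:ℝ)) / 2 with hc
  have hc0 : 0 < c := by rw [hc]; positivity
  have hlogε : Real.logb 2 ε < 0 := Real.logb_neg (by norm_num) hε0 hε1
  set B : ℝ := (1 - Real.logb 2 ε) / c with hB
  have hB0 : 0 ≤ B := by
    rw [hB]
    apply div_nonneg (by linarith) hc0.le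
  refine ⟨c, hc0, max 1000 (Nat.ceil (B^2) + 1), ?_⟩
  intro k hk
  have hk1000 : 1000 ≤ k := le_trans (le_max_left _ _) hk
  have hkB : (Nat.ceil (B^2) + 1 : ℕ) ≤ k := le_trans (le_max_right _ _) hk
  -- √k ≥ B
  have hsqB : B ≤ Real.sqrt k := by
    have h1 : B^2 ≤ (k:ℝ) := by
      have h2 : B^2 ≤ (Nat.ceil (B^2) : ℝ) := Nat.le_ceil _
      have h3 : ((Nat.ceil (B^2) + 1 : ℕ) : ℝ) ≤ (k:ℝ) := by exact_mod_cast hkB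
      push_cast at h3
      linarith
    calc B = Real.sqrt (B^2) := (Real.sqrt_sq hB0).symm
    _ ≤ Real.sqrt k := Real.sqrt_le_sqrt h1
  have hcb : 1 - Real.logb 2 ε ≤ c * Real.sqrt k := by
    rw [hB] at hsqB
    rw [div_le_iff₀ hc0] at hsqB
    linarith [mul_comm c (Real.sqrt k)]
  obtain ⟨j1, j2, hj1k, hj2k, hFj1, hFj2, hgap⟩ := quantiles δ hδ0 hδ1 k hk1000
  have hmax := smoothMax_ge k δ ε hδ0 hε0 j2 hFj2
  have hmin := smoothMin_le k δ hδ0 j1 hFj1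
  -- compute the log difference
  have hlv1 := logb_valk k j1 hj1k
  have hlv2 := logb_valk k (j2+1) (by omega)
  have hlogdiv : Real.logb 2 (ε / valk k (j2+1)) =
      Real.logb 2 ε - Real.logb 2 (valk k (j2+1)) :=
    Real.logb_div (ne_of_gt hε0) (ne_of_gt (valk_pos k (j2+1)))
  have hcast : ((j2+1 : ℕ) : ℝ) = (j2:ℝ) + 1 := by push_cast; ring
  have hkey : Real.logb 2 (ε / valk k (j2+1)) + Real.logb 2 (valk k j1) =
      Real.logb 2 ε + ((j2:ℝ) + 1 - (j1:ℝ)) := by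
    rw [hlogdiv, hlv1, hlv2, hcast]
    have hd := logb_diff
    linear_combination ((j2:ℝ) + 1 - (j1:ℝ)) * hd
  have hspread : Real.logb 2 ε + ((j2:ℝ) + 1 - (j1:ℝ)) ≤
      smoothMax (pairSpectrum k) δ - smoothMin (pairSpectrum k) δ := by
    rw [← hkey]
    linarith
  have hfinal : 2 * c * Real.sqrt k - (1 - Real.logb 2 ε) ≤
      Real.logb 2 ε + ((j2:ℝ) + 1 - (j1:ℝ)) := by
    have e1 : 2 * c * Real.sqrt k = 3*(1-2*δ)/4 * Real.sqrt k * Real.exp (-(30:ℝ)) := by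
      rw [hc, hγ]; ring
    linarith [hgap, e1]
  linarith
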